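/- If Ω₁ and Ω₂ are int-nearly convex subsets of X and int(Ω₁) ∩ int(Ω₂) ≠ ∅, then Ω₁ ∩ Ω₂ is int-nearly convex. -/

import Mathlib

variable {X : Type*} [AddCommGroup X] [Module ℝ X] [TopologicalSpace X]
  [IsTopologicalAddGroup X] [ContinuousSMul ℝ X]

def IntNearlyConvex (Ω : Set X) : Prop :=
  ∃ C : Set X, Convex ℝ C ∧ (interior C).Nonempty ∧ C ⊆ Ω ∧ Ω ⊆ closure C

/-- For a convex set with an interior point, the interior of the closure is the interior. -/
lemma aux_interior_closure_subset {s : Set X} (hs : Convex ℝ s) {x : X}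
    (hx : x ∈ interior s) : interior (closure s) ⊆ interior s := by
  intro y hy
  -- find ε > 0 with y + ε • (y - x) ∈ closure s
  have hcont : Filter.Tendsto (fun ε : ℝ => y + ε • (y - x)) (nhdsWithin 0 (Set.Ioi 0)) (nhds y) := by
    have : Filter.Tendsto (fun ε : ℝ => y + ε • (y - x)) (nhds 0) (nhds (y + (0:ℝ) • (y - x))) := by
      exact (tendsto_const_nhds.add ((continuous_id.smul continuous_const).tendsto 0))
    simpa using this.mono_left nhdsWithin_le_nhds
  have hev : ∀ᶠ ε in nhdsWithin (0:ℝ) (Set.Ioi 0),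
      y + ε • (y - x) ∈ interior (closure s) :=
    hcont.eventually (isOpen_interior.mem_nhds hy)
  obtain ⟨ε, hz, hε⟩ := (hev.and self_mem_nhdsWithin).exists
  have hε : (0:ℝ) < ε := hε
  have hz : y + ε • (y - x) ∈ closure s := interior_subset hz
  have h1ε : (0:ℝ) < 1 + ε := by linarith
  have key : (1/(1+ε)) • (y + ε • (y - x)) + (ε/(1+ε)) • x = y := by
    match_scalars <;> field_simp <;> ring
  have := hs.combo_closure_interior_mem_interior hz hx
    (a := 1/(1+ε)) (b := ε/(1+ε)) (by positivity) (by positivity)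
    (by field_simp)
  rwa [key] at this

theorem stmt2 (Ω₁ Ω₂ : Set X) (h₁ : IntNearlyConvex Ω₁) (h₂ : IntNearlyConvex Ω₂)
    (hint : (interior Ω₁ ∩ interior Ω₂).Nonempty) :
    IntNearlyConvex (Ω₁ ∩ Ω₂) := by
  obtain ⟨C₁, hC₁conv, hC₁int, hC₁sub, hC₁cl⟩ := h₁
  obtain ⟨C₂, hC₂conv, hC₂int, hC₂sub, hC₂cl⟩ := h₂
  obtain ⟨x, hx₁, hx₂⟩ := hint
  obtain ⟨x₁, hx₁'⟩ := hC₁int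
  obtain ⟨x₂, hx₂'⟩ := hC₂int
  have hxC₁ : x ∈ interior C₁ :=
    aux_interior_closure_subset hC₁conv hx₁' (interior_mono hC₁cl hx₁)
  have hxC₂ : x ∈ interior C₂ :=
    aux_interior_closure_subset hC₂conv hx₂' (interior_mono hC₂cl hx₂)
  refine ⟨C₁ ∩ C₂, hC₁conv.inter hC₂conv, ⟨x, ?_⟩,
    Set.inter_subset_inter hC₁sub hC₂sub, ?_⟩
  · rw [interior_inter]; exact ⟨hxC₁, hxC₂⟩
  · intro y ⟨hy₁, hy₂⟩
    have hy₁ : y ∈ closure C₁ := hC₁cl hy₁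
    have hy₂ : y ∈ closure C₂ := hC₂cl hy₂
    have hcont : Filter.Tendsto (fun t : ℝ => y + t • (x - y))
        (nhdsWithin 0 (Set.Ioc 0 1)) (nhds y) := by
      have : Filter.Tendsto (fun t : ℝ => y + t • (x - y)) (nhds 0)
          (nhds (y + (0:ℝ) • (x - y))) :=
        tendsto_const_nhds.add ((continuous_id.smul continuous_const).tendsto 0)
      simpa using this.mono_left nhdsWithin_le_nhds
    have : (nhdsWithin (0:ℝ) (Set.Ioc 0 1)).NeBot := by
      apply mem_closure_iff_nhdsWithin_neBot.mp
      rw [closure_Ioc (one_ne_zero).symm]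
      exact ⟨le_refl 0, zero_le_one⟩
    refine mem_closure_of_tendsto hcont ?_
    filter_upwards [self_mem_nhdsWithin] with t ht
    exact ⟨hC₁conv.add_smul_sub_mem_interior' hy₁ hxC₁ ht |> interior_subset,
      hC₂conv.add_smul_sub_mem_interior' hy₂ hxC₂ ht |> interior_subset⟩
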